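/- Let p, q ∈ ℝ and let f : [a,b] → (0,∞) be a differentiable function, where 0 < a < b. Then f is (p,q)-convex (respectively, (p,q)-concave) if and only if the function x ↦ x^{1−p} · f'(x) · f(x)^{q−1} is increasing (respectively, decreasing) on [a,b]. -/

import Mathlib

open Set

/-- The power mean `M_t(x,y)`: `((x^t + y^t)/2)^(1/t)` for `t ≠ 0`, and
`√(xy)` for `t = 0`. -/
noncomputable def powerMean (t x y : ℝ) : ℝ :=
  if t = 0 then Real.sqrt (x * y) else ((x ^ t + y ^ t) / 2) ^ (1 / t)

/-- `f` is `(p,q)`-convex on `s` if `f(M_p(x,y)) ≤ M_q(f(x), f(y))` for all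
`x, y ∈ s`. -/
def IsPQConvexOn (p q : ℝ) (s : Set ℝ) (f : ℝ → ℝ) : Prop :=
  ∀ x ∈ s, ∀ y ∈ s, f (powerMean p x y) ≤ powerMean q (f x) (f y)

/-- `f` is `(p,q)`-concave on `s` if `f(M_p(x,y)) ≥ M_q(f(x), f(y))` for all
`x, y ∈ s`. -/
def IsPQConcaveOn (p q : ℝ) (s : Set ℝ) (f : ℝ → ℝ) : Prop :=
  ∀ x ∈ s, ∀ y ∈ s, f (powerMean p x y) ≥ powerMean q (f x) (f y)

/-- Baricz's criterion: a positive differentiable function `f` on `[a,b]`,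
`0 < a < b`, is `(p,q)`-convex (resp. `(p,q)`-concave) if and only if
`x ↦ x^(1-p) f'(x) f(x)^(q-1)` is increasing (resp. decreasing) on `[a,b]`. -/

noncomputable def phiBZ (t x : ℝ) : ℝ := if t = 0 then Real.log x else (x ^ t - 1) / t

noncomputable def psiBZ (t u : ℝ) : ℝ := if t = 0 then Real.exp u else (1 + t * u) ^ (1 / t)


lemma phiBZ_strictMonoOn (t : ℝ) : StrictMonoOn (phiBZ t) (Ioi 0) := by
  intro x hx y hy hxy
  simp only [phiBZ]
  rcases eq_or_ne t 0 with rfl | ht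
  · simpa using Real.log_lt_log hx hxy
  · simp only [if_neg ht]
    rcases ht.lt_or_gt with htneg | htpos
    · exact div_lt_div_of_neg_of_lt htneg (by linarith [Real.rpow_lt_rpow_of_neg hx hxy htneg])
    · exact div_lt_div_of_pos_right (by linarith [Real.rpow_lt_rpow (le_of_lt hx) hxy htpos]) htpos

lemma phiBZ_lt_iff (t : ℝ) {x y : ℝ} (hx : 0 < x) (hy : 0 < y) :
    phiBZ t x < phiBZ t y ↔ x < y := (phiBZ_strictMonoOn t).lt_iff_lt hx hy

lemma phiBZ_le_iff (t : ℝ) {x y : ℝ} (hx : 0 < x) (hy : 0 < y) :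
    phiBZ t x ≤ phiBZ t y ↔ x ≤ y := (phiBZ_strictMonoOn t).le_iff_le hx hy

lemma psiBZ_pos (t : ℝ) {u : ℝ} (hu : t ≠ 0 → 0 < 1 + t * u) : 0 < psiBZ t u := by
  simp only [psiBZ]
  rcases eq_or_ne t 0 with rfl | ht
  · simpa using Real.exp_pos u
  · simpa [if_neg ht] using Real.rpow_pos_of_pos (hu ht) (1 / t)

lemma one_add_mul_phiBZ (t : ℝ) {x : ℝ} (ht : t ≠ 0) : 1 + t * phiBZ t x = x ^ t := by
  simp only [phiBZ, if_neg ht]; field_simp; ring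

lemma psiBZ_phiBZ (t : ℝ) {x : ℝ} (hx : 0 < x) : psiBZ t (phiBZ t x) = x := by
  rcases eq_or_ne t 0 with rfl | ht
  · simp [psiBZ, phiBZ, Real.exp_log hx]
  · simp only [psiBZ, if_neg ht, one_add_mul_phiBZ t ht]
    rw [← Real.rpow_mul hx.le, mul_one_div_cancel ht, Real.rpow_one]

lemma phiBZ_psiBZ (t : ℝ) {u : ℝ} (hu : t ≠ 0 → 0 < 1 + t * u) : phiBZ t (psiBZ t u) = u := by
  rcases eq_or_ne t 0 with rfl | ht
  · simp [psiBZ, phiBZ]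
  · simp only [psiBZ, phiBZ, if_neg ht]
    rw [← Real.rpow_mul (hu ht).le, one_div_mul_cancel ht, Real.rpow_one]
    field_simp
    ring

lemma powerMean_pos (t : ℝ) {x y : ℝ} (hx : 0 < x) (hy : 0 < y) : 0 < powerMean t x y := by
  simp only [powerMean]
  rcases eq_or_ne t 0 with rfl | ht
  · simpa using Real.sqrt_pos.2 (mul_pos hx hy)
  · have : 0 < (x ^ t + y ^ t) / 2 := by
      have := Real.rpow_pos_of_pos hx t; have := Real.rpow_pos_of_pos hy t; linarith
    simpa [if_neg ht] using Real.rpow_pos_of_pos this (1 / t)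

lemma phiBZ_powerMean (t : ℝ) {x y : ℝ} (hx : 0 < x) (hy : 0 < y) :
    phiBZ t (powerMean t x y) = (phiBZ t x + phiBZ t y) / 2 := by
  rcases eq_or_ne t 0 with rfl | ht
  · have e1 : powerMean 0 x y = Real.sqrt (x * y) := by simp [powerMean]
    have e2 : ∀ z : ℝ, phiBZ 0 z = Real.log z := fun z => by simp [phiBZ]
    rw [e1, e2, e2, e2, Real.log_sqrt (mul_pos hx hy).le, Real.log_mul hx.ne' hy.ne']
  · simp only [phiBZ, powerMean, if_neg ht]
    have h2 : 0 < (x ^ t + y ^ t) / 2 := by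
      have := Real.rpow_pos_of_pos hx t; have := Real.rpow_pos_of_pos hy t; linarith
    rw [← Real.rpow_mul h2.le, one_div_mul_cancel ht, Real.rpow_one]
    ring

lemma powerMean_mem_Icc (t : ℝ) {a b x y : ℝ} (ha : 0 < a)
    (hx : x ∈ Icc a b) (hy : y ∈ Icc a b) : powerMean t x y ∈ Icc a b := by
  have hx0 : 0 < x := ha.trans_le hx.1
  have hy0 : 0 < y := ha.trans_le hy.1
  have hb : 0 < b := ha.trans_le (hx.1.trans hx.2)
  have hM : 0 < powerMean t x y := powerMean_pos t hx0 hy0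
  constructor
  · rw [← phiBZ_le_iff t ha hM, phiBZ_powerMean t hx0 hy0]
    have h1 := (phiBZ_le_iff t ha hx0).2 hx.1
    have h2 := (phiBZ_le_iff t ha hy0).2 hy.1
    linarith
  · rw [← phiBZ_le_iff t hM hb, phiBZ_powerMean t hx0 hy0]
    have h1 := (phiBZ_le_iff t hx0 hb).2 hx.2
    have h2 := (phiBZ_le_iff t hy0 hb).2 hy.2
    linarith

lemma hasDerivAt_phiBZ (t : ℝ) {x : ℝ} (hx : 0 < x) :
    HasDerivAt (phiBZ t) (x ^ (t - 1)) x := by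
  rcases eq_or_ne t 0 with rfl | ht
  · have h : phiBZ 0 = Real.log := by funext z; simp [phiBZ]
    rw [h]
    simpa [Real.rpow_neg_one, Real.rpow_neg hx.le, zero_sub] using Real.hasDerivAt_log hx.ne'
  · have h : phiBZ t = fun z => (z ^ t - 1) / t := by funext z; simp [phiBZ, if_neg ht]
    rw [h]
    have := ((Real.hasDerivAt_rpow_const (p := t) (Or.inl hx.ne')).sub_const 1).div_const t
    convert this using 1
    rfl
    rfl
    field_simp

lemma hasDerivAt_psiBZ (t : ℝ) {u : ℝ} (hu : t ≠ 0 → 0 < 1 + t * u) :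
    HasDerivAt (psiBZ t) (psiBZ t u ^ (1 - t)) u := by
  rcases eq_or_ne t 0 with rfl | ht
  · have h : psiBZ 0 = Real.exp := by funext z; simp [psiBZ]
    rw [h]
    simpa [Real.rpow_one] using Real.hasDerivAt_exp u
  · have h : psiBZ t = fun z => (1 + t * z) ^ (1 / t) := by funext z; simp [psiBZ, if_neg ht]
    rw [h]
    have hc : HasDerivAt (fun z : ℝ => 1 + t * z) t u := by
      simpa using ((hasDerivAt_id u).const_mul t).const_add 1
    have h1 := (Real.hasDerivAt_rpow_const (p := 1 / t) (Or.inl (hu ht).ne')).comp u hc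
    convert h1 using 1
    rfl
    rfl
    rfl
    simp only [one_div]
    rw [← Real.rpow_mul (hu ht).le]
    rw [show t⁻¹ * (1 - t) = t⁻¹ - 1 by field_simp]
    field_simp

open Filter Topology in
lemma slope_bound_of_midpoint {A B : ℝ} {G G' : ℝ → ℝ} {u v : ℝ}
    (hu : u ∈ Icc A B) (hv : v ∈ Icc A B) (huv : u < v)
    (hder : HasDerivWithinAt G (G' u) (Icc A B) u)
    (hmid : ∀ x ∈ Icc A B, ∀ y ∈ Icc A B, G ((x + y) / 2) ≤ (G x + G y) / 2) :
    G' u ≤ (G v - G u) / (v - u) := by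
  set w : ℕ → ℝ := fun n => u + (v - u) * (1 / 2) ^ n with hw
  have h0 : (0:ℝ) < v - u := sub_pos.2 huv
  have hd : ∀ n : ℕ, (0:ℝ) < (v - u) * (1 / 2) ^ n := fun n => mul_pos h0 (by positivity)
  have hwgt : ∀ n, u < w n := fun n => by simpa [hw] using hd n
  have hwle : ∀ n, w n ≤ v := fun n => by
    have h1 : ((1:ℝ)/2) ^ n ≤ 1 := pow_le_one₀ (by norm_num) (by norm_num)
    have := mul_le_mul_of_nonneg_left h1 (le_of_lt (sub_pos.2 huv))
    simp only [hw]; linarith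
  have hwmem : ∀ n, w n ∈ Icc A B := fun n =>
    ⟨hu.1.trans (hwgt n).le, (hwle n).trans hv.2⟩
  have key : ∀ n, (G (w n) - G u) / (w n - u) ≤ (G v - G u) / (v - u) := by
    intro n
    induction n with
    | zero => simp [hw]
    | succ n ih =>
        have hmidn := hmid u hu (w n) (hwmem n)
        have e1 : w (n + 1) = (u + w n) / 2 := by simp only [hw]; ring
        have e2 : w (n + 1) - u = (w n - u) / 2 := by simp only [hw]; ring
        have hpos : (0:ℝ) < w n - u := sub_pos.2 (hwgt n)
        calc (G (w (n+1)) - G u) / (w (n+1) - u)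
            ≤ ((G u + G (w n)) / 2 - G u) / (w (n+1) - u) := by
              rw [← e1] at hmidn
              have hp : (0:ℝ) < w (n+1) - u := sub_pos.2 (hwgt (n+1))
              exact (div_le_div_iff_of_pos_right hp).2 (by linarith)
          _ = (G (w n) - G u) / (w n - u) := by rw [e2]; field_simp; ring
          _ ≤ (G v - G u) / (v - u) := ih
  have htend : Tendsto w atTop (𝓝 u) := by
    have h1 : Tendsto (fun n : ℕ => ((1:ℝ) / 2) ^ n) atTop (𝓝 0) :=
      tendsto_pow_atTop_nhds_zero_of_lt_one (by norm_num) (by norm_num)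
    have h2 : Tendsto (fun n : ℕ => u + (v - u) * ((1:ℝ) / 2) ^ n) atTop (𝓝 (u + (v - u) * 0)) :=
      (h1.const_mul (v - u)).const_add u
    rw [hw]; simpa using h2
  have htend' : Tendsto w atTop (𝓝[Icc A B \ {u}] u) := by
    rw [tendsto_nhdsWithin_iff]
    exact ⟨htend, Eventually.of_forall fun n => ⟨hwmem n, (hwgt n).ne'⟩⟩
  have hslope := (hasDerivWithinAt_iff_tendsto_slope.mp hder).comp htend'
  refine le_of_tendsto hslope (Eventually.of_forall fun n => ?_)
  have : slope G u (w n) = (G (w n) - G u) / (w n - u) := by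
    rw [slope_def_field]
  simpa [Function.comp, this] using key n

open Filter Topology in
lemma slope_bound_of_midpoint' {A B : ℝ} {G G' : ℝ → ℝ} {u v : ℝ}
    (hu : u ∈ Icc A B) (hv : v ∈ Icc A B) (huv : u < v)
    (hder : HasDerivWithinAt G (G' v) (Icc A B) v)
    (hmid : ∀ x ∈ Icc A B, ∀ y ∈ Icc A B, G ((x + y) / 2) ≤ (G x + G y) / 2) :
    (G v - G u) / (v - u) ≤ G' v := by
  set w : ℕ → ℝ := fun n => v - (v - u) * (1 / 2) ^ n with hw
  have h0 : (0:ℝ) < v - u := sub_pos.2 huv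
  have hd : ∀ n : ℕ, (0:ℝ) < (v - u) * (1 / 2) ^ n := fun n => mul_pos h0 (by positivity)
  have hwlt : ∀ n, w n < v := fun n => by simpa [hw] using hd n
  have hwge : ∀ n, u ≤ w n := fun n => by
    have h1 : ((1:ℝ)/2) ^ n ≤ 1 := pow_le_one₀ (by norm_num) (by norm_num)
    have := mul_le_mul_of_nonneg_left h1 (le_of_lt (sub_pos.2 huv))
    simp only [hw]; linarith
  have hwmem : ∀ n, w n ∈ Icc A B := fun n =>
    ⟨hu.1.trans (hwge n), (hwlt n).le.trans hv.2⟩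
  have key : ∀ n, (G v - G u) / (v - u) ≤ (G v - G (w n)) / (v - w n) := by
    intro n
    induction n with
    | zero => simp [hw]
    | succ n ih =>
        have hmidn := hmid (w n) (hwmem n) v hv
        have e1 : w (n + 1) = (w n + v) / 2 := by simp only [hw]; ring
        have e2 : v - w (n + 1) = (v - w n) / 2 := by simp only [hw]; ring
        have hpos : (0:ℝ) < v - w n := sub_pos.2 (hwlt n)
        refine ih.trans ?_
        calc (G v - G (w n)) / (v - w n)
            = (G v - (G (w n) + G v) / 2) / (v - w (n+1)) := by rw [e2]; field_simp; ring
          _ ≤ (G v - G (w (n+1))) / (v - w (n+1)) := by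
              rw [← e1] at hmidn
              have hp : (0:ℝ) < v - w (n+1) := sub_pos.2 (hwlt (n+1))
              exact (div_le_div_iff_of_pos_right hp).2 (by linarith)
  have htend : Tendsto w atTop (𝓝 v) := by
    have h1 : Tendsto (fun n : ℕ => ((1:ℝ) / 2) ^ n) atTop (𝓝 0) :=
      tendsto_pow_atTop_nhds_zero_of_lt_one (by norm_num) (by norm_num)
    have h2 : Tendsto (fun n : ℕ => v - (v - u) * ((1:ℝ) / 2) ^ n) atTop (𝓝 (v - (v - u) * 0)) :=
      tendsto_const_nhds.sub (h1.const_mul (v - u))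
    rw [hw]; simpa using h2
  have htend' : Tendsto w atTop (𝓝[Icc A B \ {v}] v) := by
    rw [tendsto_nhdsWithin_iff]
    exact ⟨htend, Eventually.of_forall fun n => ⟨hwmem n, (hwlt n).ne⟩⟩
  have hslope := (hasDerivWithinAt_iff_tendsto_slope.mp hder).comp htend'
  refine ge_of_tendsto hslope (Eventually.of_forall fun n => ?_)
  have hne : w n - v ≠ 0 := sub_ne_zero.2 (hwlt n).ne
  have hne' : v - w n ≠ 0 := sub_ne_zero.2 (hwlt n).ne'
  have : slope G v (w n) = (G v - G (w n)) / (v - w n) := by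
    rw [slope_def_field, div_eq_div_iff hne hne']; ring
  simpa [Function.comp, this] using key n

lemma monotoneOn_of_midpoint {A B : ℝ} {G G' : ℝ → ℝ}
    (hder : ∀ u ∈ Icc A B, HasDerivWithinAt G (G' u) (Icc A B) u)
    (hmid : ∀ x ∈ Icc A B, ∀ y ∈ Icc A B, G ((x + y) / 2) ≤ (G x + G y) / 2) :
    MonotoneOn G' (Icc A B) := by
  intro u hu v hv huv
  rcases eq_or_lt_of_le huv with rfl | h
  · exact le_refl _
  · exact (slope_bound_of_midpoint hu hv h (hder u hu) hmid).trans
      (slope_bound_of_midpoint' hu hv h (hder v hv) hmid)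


lemma pq_core (p q a b : ℝ) (ha : 0 < a) (hab : a < b) (f f' : ℝ → ℝ)
    (hpos : ∀ x ∈ Icc a b, 0 < f x)
    (hder : ∀ x ∈ Icc a b, HasDerivWithinAt f (f' x) (Icc a b) x) :
    IsPQConvexOn p q (Icc a b) f ↔
      MonotoneOn (fun x => x ^ (1 - p) * f' x * f x ^ (q - 1)) (Icc a b) := by
  have hb : 0 < b := ha.trans hab
  set A := phiBZ p a with hA
  set B := phiBZ p b with hB
  have hxpos : ∀ x ∈ Icc a b, 0 < x := fun x hx => ha.trans_le hx.1
  -- positivity of 1 + p * u on [A, B]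
  have hcond : ∀ u ∈ Icc A B, p ≠ 0 → 0 < 1 + p * u := by
    intro u hu hp
    have e1 : 1 + p * A = a ^ p := one_add_mul_phiBZ p hp
    have e2 : 1 + p * B = b ^ p := one_add_mul_phiBZ p hp
    have p1 : (0:ℝ) < a ^ p := Real.rpow_pos_of_pos ha p
    have p2 : (0:ℝ) < b ^ p := Real.rpow_pos_of_pos hb p
    rcases lt_or_gt_of_ne hp with hneg | hpos'
    · nlinarith [hu.2, mul_le_mul_of_nonpos_left hu.2 hneg.le]
    · nlinarith [hu.1, mul_le_mul_of_nonneg_left hu.1 hpos'.le]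
  have hpsipos : ∀ u ∈ Icc A B, 0 < psiBZ p u := fun u hu => psiBZ_pos p (hcond u hu)
  have hphipsi : ∀ u ∈ Icc A B, phiBZ p (psiBZ p u) = u := fun u hu => phiBZ_psiBZ p (hcond u hu)
  have hphimem : ∀ x ∈ Icc a b, phiBZ p x ∈ Icc A B := by
    intro x hx
    exact ⟨(phiBZ_le_iff p ha (hxpos x hx)).2 hx.1, (phiBZ_le_iff p (hxpos x hx) hb).2 hx.2⟩
  have hmaps : ∀ u ∈ Icc A B, psiBZ p u ∈ Icc a b := by
    intro u hu
    have h1 := hphipsi u hu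
    constructor
    · rw [← phiBZ_le_iff p ha (hpsipos u hu), h1]; exact hu.1
    · rw [← phiBZ_le_iff p (hpsipos u hu) hb, h1]; exact hu.2
  set G : ℝ → ℝ := fun u => phiBZ q (f (psiBZ p u)) with hG
  set G' : ℝ → ℝ := fun u =>
    psiBZ p u ^ (1 - p) * f' (psiBZ p u) * f (psiBZ p u) ^ (q - 1) with hG'
  have hAB : A < B := (phiBZ_lt_iff p ha hb).2 hab
  have hGder : ∀ u ∈ Icc A B, HasDerivWithinAt G (G' u) (Icc A B) u := by
    intro u hu
    have hx : psiBZ p u ∈ Icc a b := hmaps u hu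
    have h1 : HasDerivAt (psiBZ p) (psiBZ p u ^ (1 - p)) u := hasDerivAt_psiBZ p (hcond u hu)
    have h2 : HasDerivWithinAt f (f' (psiBZ p u)) (Icc a b) (psiBZ p u) := hder _ hx
    have h3 : HasDerivAt (phiBZ q) (f (psiBZ p u) ^ (q - 1)) (f (psiBZ p u)) :=
      hasDerivAt_phiBZ q (hpos _ hx)
    have c1 : HasDerivWithinAt (f ∘ psiBZ p)
        (f' (psiBZ p u) * psiBZ p u ^ (1 - p)) (Icc A B) u :=
      HasDerivWithinAt.comp u h2 h1.hasDerivWithinAt hmaps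
    have c2 := HasDerivAt.comp_hasDerivWithinAt u h3 c1
    have : G = phiBZ q ∘ (f ∘ psiBZ p) := by funext z; simp [hG, Function.comp]
    rw [this]
    convert c2 using 1
    rfl
    rfl
    simp [hG']; ring
  -- transfer of monotonicity
  have htransfer : MonotoneOn (fun x => x ^ (1 - p) * f' x * f x ^ (q - 1)) (Icc a b) ↔
      MonotoneOn G' (Icc A B) := by
    constructor
    · intro hm u hu v hv huv
      have h1 : psiBZ p u ≤ psiBZ p v := by
        rw [← phiBZ_le_iff p (hpsipos u hu) (hpsipos v hv), hphipsi u hu, hphipsi v hv]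
        exact huv
      exact hm (hmaps u hu) (hmaps v hv) h1
    · intro hm x hx y hy hxy
      have h1 : phiBZ p x ≤ phiBZ p y := (phiBZ_le_iff p (hxpos x hx) (hxpos y hy)).2 hxy
      have := hm (hphimem x hx) (hphimem y hy) h1
      simpa [hG', psiBZ_phiBZ p (hxpos x hx), psiBZ_phiBZ p (hxpos y hy)] using this
  -- midpoint inequality transfer
  have hmid_iff : IsPQConvexOn p q (Icc a b) f ↔
      ∀ u ∈ Icc A B, ∀ v ∈ Icc A B, G ((u + v) / 2) ≤ (G u + G v) / 2 := by
    constructor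
    · intro hc u hu v hv
      set x := psiBZ p u with hxdef
      set y := psiBZ p v with hydef
      have hx : x ∈ Icc a b := hmaps u hu
      have hy : y ∈ Icc a b := hmaps v hv
      have hM : powerMean p x y ∈ Icc a b := powerMean_mem_Icc p ha hx hy
      have e1 : (u + v) / 2 = phiBZ p (powerMean p x y) := by
        rw [phiBZ_powerMean p (hxpos x hx) (hxpos y hy), hphipsi u hu, hphipsi v hv]
      have e2 : G ((u + v) / 2) = phiBZ q (f (powerMean p x y)) := by
        rw [e1]; simp only [hG, psiBZ_phiBZ p (hxpos _ hM)]
      have e3 : (G u + G v) / 2 = phiBZ q (powerMean q (f x) (f y)) := by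
        rw [phiBZ_powerMean q (hpos x hx) (hpos y hy)]
      rw [e2, e3]
      exact (phiBZ_le_iff q (hpos _ hM) (powerMean_pos q (hpos x hx) (hpos y hy))).2
        (hc x hx y hy)
    · intro hmid x hx y hy
      have hM : powerMean p x y ∈ Icc a b := powerMean_mem_Icc p ha hx hy
      have hu := hphimem x hx
      have hv := hphimem y hy
      have := hmid _ hu _ hv
      have e1 : (phiBZ p x + phiBZ p y) / 2 = phiBZ p (powerMean p x y) :=
        (phiBZ_powerMean p (hxpos x hx) (hxpos y hy)).symm
      have e2 : G ((phiBZ p x + phiBZ p y) / 2) = phiBZ q (f (powerMean p x y)) := by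
        rw [e1]; simp only [hG, psiBZ_phiBZ p (hxpos _ hM)]
      have e3 : (G (phiBZ p x) + G (phiBZ p y)) / 2 = phiBZ q (powerMean q (f x) (f y)) := by
        simp only [hG, psiBZ_phiBZ p (hxpos x hx), psiBZ_phiBZ p (hxpos y hy)]
        rw [phiBZ_powerMean q (hpos x hx) (hpos y hy)]
      rw [e2, e3] at this
      exact (phiBZ_le_iff q (hpos _ hM) (powerMean_pos q (hpos x hx) (hpos y hy))).1 this
  rw [hmid_iff, htransfer]
  constructor
  · -- midpoint inequality implies G' monotone
    exact fun h => monotoneOn_of_midpoint hGder h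
  · -- G' monotone implies midpoint inequality, via convexity
    intro hm
    have hGcont : ContinuousOn G (Icc A B) := fun u hu => (hGder u hu).continuousWithinAt
    have hint : interior (Icc A B) = Ioo A B := interior_Icc
    have hGat : ∀ u ∈ Ioo A B, HasDerivAt G (G' u) u := by
      intro u hu
      exact (hGder u (Ioo_subset_Icc_self hu)).hasDerivAt (Icc_mem_nhds hu.1 hu.2)
    have hGdiff : DifferentiableOn ℝ G (interior (Icc A B)) := by
      rw [hint]; exact fun u hu => (hGat u hu).differentiableAt.differentiableWithinAt
    have hderiv_mono : MonotoneOn (deriv G) (interior (Icc A B)) := by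
      rw [hint]
      intro u hu v hv huv
      rw [(hGat u hu).deriv, (hGat v hv).deriv]
      exact hm (Ioo_subset_Icc_self hu) (Ioo_subset_Icc_self hv) huv
    have hconv : ConvexOn ℝ (Icc A B) G :=
      hderiv_mono.convexOn_of_deriv (convex_Icc A B) hGcont hGdiff
    intro u hu v hv
    have h2 := hconv.2 hu hv (by norm_num : (0:ℝ) ≤ 1/2) (by norm_num : (0:ℝ) ≤ 1/2)
      (by norm_num)
    simp only [smul_eq_mul] at h2
    calc G ((u + v) / 2) = G (1/2 * u + 1/2 * v) := by ring_nf
      _ ≤ 1/2 * G u + 1/2 * G v := h2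
      _ = (G u + G v) / 2 := by ring


lemma powerMean_inv (t : ℝ) {x y : ℝ} (hx : 0 < x) (hy : 0 < y) :
    powerMean (-t) x⁻¹ y⁻¹ = (powerMean t x y)⁻¹ := by
  rcases eq_or_ne t 0 with rfl | ht
  · have e : ∀ z w : ℝ, powerMean 0 z w = Real.sqrt (z * w) := fun z w => by simp [powerMean]
    rw [neg_zero, e, e, ← mul_inv, Real.sqrt_inv]
  · have hS : 0 < (x ^ t + y ^ t) / 2 := by
      have := Real.rpow_pos_of_pos hx t; have := Real.rpow_pos_of_pos hy t; linarith
    simp only [powerMean, if_neg ht, if_neg (neg_ne_zero.2 ht)]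
    have e1 : x⁻¹ ^ (-t) = x ^ t := by
      rw [Real.inv_rpow hx.le, Real.rpow_neg hx.le, inv_inv]
    have e2 : y⁻¹ ^ (-t) = y ^ t := by
      rw [Real.inv_rpow hy.le, Real.rpow_neg hy.le, inv_inv]
    rw [e1, e2, show 1 / (-t) = -(1/t) by ring, Real.rpow_neg hS.le]


theorem pq_convex_iff (p q a b : ℝ) (ha : 0 < a) (hab : a < b) (f f' : ℝ → ℝ)
    (hpos : ∀ x ∈ Icc a b, 0 < f x)
    (hder : ∀ x ∈ Icc a b, HasDerivWithinAt f (f' x) (Icc a b) x) :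
    (IsPQConvexOn p q (Icc a b) f ↔
      MonotoneOn (fun x => x ^ (1 - p) * f' x * f x ^ (q - 1)) (Icc a b)) ∧
    (IsPQConcaveOn p q (Icc a b) f ↔
      AntitoneOn (fun x => x ^ (1 - p) * f' x * f x ^ (q - 1)) (Icc a b)) := by
  constructor
  · exact pq_core p q a b ha hab f f' hpos hder
  · set g : ℝ → ℝ := fun x => (f x)⁻¹ with hg
    set g' : ℝ → ℝ := fun x => -f' x / f x ^ 2 with hg'
    have hgpos : ∀ x ∈ Icc a b, 0 < g x := fun x hx => inv_pos.2 (hpos x hx)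
    have hgder : ∀ x ∈ Icc a b, HasDerivWithinAt g (g' x) (Icc a b) x := fun x hx =>
      (hder x hx).inv (hpos x hx).ne'
    have h1 : IsPQConcaveOn p q (Icc a b) f ↔ IsPQConvexOn p (-q) (Icc a b) g := by
      constructor
      · intro hc x hx y hy
        have hM := powerMean_mem_Icc p ha hx hy
        have := hc x hx y hy
        simp only [hg]
        rw [powerMean_inv q (hpos x hx) (hpos y hy)]
        exact (inv_le_inv₀ (hpos _ hM) (powerMean_pos q (hpos x hx) (hpos y hy))).2 this
      · intro hc x hx y hy
        have hM := powerMean_mem_Icc p ha hx hy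
        have := hc x hx y hy
        simp only [hg] at this
        rw [powerMean_inv q (hpos x hx) (hpos y hy)] at this
        exact (inv_le_inv₀ (hpos _ hM) (powerMean_pos q (hpos x hx) (hpos y hy))).1 this
    rw [h1, pq_core p (-q) a b ha hab g g' hgpos hgder]
    have heq : ∀ x ∈ Icc a b, x ^ (1 - p) * g' x * g x ^ (-q - 1) =
        -(x ^ (1 - p) * f' x * f x ^ (q - 1)) := by
      intro x hx
      have hf := hpos x hx
      have e1 : g x ^ (-q - 1) = f x ^ (q + 1) := by
        simp only [hg]
        rw [Real.inv_rpow hf.le, ← Real.rpow_neg hf.le, show -(-q - 1) = q + 1 by ring]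
      have e2 : f x ^ (q + 1) = f x ^ (q - 1) * f x ^ 2 := by
        rw [show ((f x) ^ 2 : ℝ) = f x ^ ((2:ℕ) : ℝ) from (Real.rpow_natCast _ 2).symm,
          ← Real.rpow_add hf]
        congr 1
        push_cast
        ring
      rw [e1, e2]
      simp only [hg']
      have h2 : (f x) ^ 2 ≠ 0 := pow_ne_zero 2 hf.ne'
      have h3 : f x ^ (q - 1) ≠ 0 := (Real.rpow_pos_of_pos hf _).ne'
      field_simp
    constructor
    · intro hm x hx y hy hxy
      have h2 := hm hx hy hxy
      dsimp only at h2
      rw [heq x hx, heq y hy] at h2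
      dsimp only
      linarith
    · intro hm u hu v hv huv
      have h2 := hm hu hv huv
      dsimp only at h2 ⊢
      rw [heq u hu, heq v hv]
      linarith
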